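/- For every integer n ≥ 1 and every integer l with 0 ≤ l ≤ 2^n, one has Σ^{2^n + l}_{n+1} = Σ^{2^n}_{n+1} − Σ^l_{n+1} (equivalently, with a(m,j) := −Σ^j_m, a(n+1, l + 2^n) = a(n+1, 2^n) − a(n+1, l)). -/
import Mathlib


/-- The ±1 Thue–Morse sequence: `u n = (-1)^(s₂(n)+1)` where `s₂` is the binary digit sum. -/
def u (n : ℕ) : ℤ := (-1) ^ ((Nat.digits 2 n).sum + 1)

/-- The "Pascal triangle" associated to the Thue–Morse sequence:
`Sig k n` is `Σ^k_n` (k the superscript, n the subscript). -/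
def Sig : ℕ → ℕ → ℤ
  | k, 0 => u k
  | 0, _ + 1 => 0
  | k + 1, n + 1 => Sig k n + Sig k (n + 1)

lemma u_even (k : ℕ) : u (2 * k) = u k := by
  rcases Nat.eq_zero_or_pos k with h | h
  · simp [h]
  · unfold u
    rw [Nat.digits_def' (by norm_num : 1 < 2) (by omega)]
    have h1 : (2 * k) % 2 = 0 := by omega
    have h2 : (2 * k) / 2 = k := by omega
    rw [h1, h2, List.sum_cons]
    norm_num

lemma u_odd (k : ℕ) : u (2 * k + 1) = -u k := by
  unfold u
  rw [Nat.digits_def' (by norm_num : 1 < 2) (by omega)]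
  have h1 : (2 * k + 1) % 2 = 1 := by omega
  have h2 : (2 * k + 1) / 2 = k := by omega
  rw [h1, h2, List.sum_cons]
  have : (1 : ℕ) + ((Nat.digits 2 k).sum) + 1 = ((Nat.digits 2 k).sum + 1) + 1 := by ring
  rw [this, pow_succ]
  ring

lemma u_flip : ∀ n j, j < 2 ^ n → u (2 ^ n + j) = -u j := by
  intro n
  induction n with
  | zero =>
    intro j hj
    interval_cases j
    norm_num [u]
  | succ n ih =>
    intro j hj
    rcases Nat.even_or_odd j with ⟨q, hq⟩ | ⟨q, hq⟩
    · have hq' : q < 2 ^ n := by subst hq; rw [pow_succ] at hj; omega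
      have e : 2 ^ (n + 1) + j = 2 * (2 ^ n + q) := by subst hq; rw [pow_succ]; ring
      have e2 : j = 2 * q := by omega
      rw [e, u_even, ih q hq', e2, u_even]
    · have hq' : q < 2 ^ n := by subst hq; rw [pow_succ] at hj; omega
      have e : 2 ^ (n + 1) + j = 2 * (2 ^ n + q) + 1 := by subst hq; rw [pow_succ]; ring
      rw [e, u_odd, ih q hq', hq, u_odd]

lemma sigsum (m : ℕ) : ∀ k, Sig k (m + 1) = ∑ i ∈ Finset.range k, Sig i m := by
  intro k
  induction k with
  | zero => simp [Sig]
  | succ k ih =>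
    rw [Finset.sum_range_succ, ← ih]
    show Sig k m + Sig k (m + 1) = _
    ring

lemma key : ∀ m n j, m ≤ n → j < 2 ^ n → Sig (2 ^ n + j) m = -Sig j m := by
  intro m
  induction m with
  | zero => intro n j _ hj; simpa [Sig] using u_flip n j hj
  | succ m ih =>
    intro n j hmn hj
    obtain ⟨n, rfl⟩ : ∃ n', n = n' + 1 := ⟨n - 1, by omega⟩
    rw [sigsum, sigsum, Finset.sum_range_add]
    have h1 : ∑ i ∈ Finset.range (2 ^ (n + 1)), Sig i m = 0 := by
      have : (2 : ℕ) ^ (n + 1) = 2 ^ n + 2 ^ n := by rw [pow_succ]; ring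
      rw [this, Finset.sum_range_add]
      have : ∀ i ∈ Finset.range (2 ^ n), Sig (2 ^ n + i) m = -Sig i m := by
        intro i hi
        exact ih n i (by omega) (Finset.mem_range.mp hi)
      rw [Finset.sum_congr rfl this]
      simp
    have h2 : ∀ i ∈ Finset.range j, Sig (2 ^ (n + 1) + i) m = -Sig i m := by
      intro i hi
      exact ih (n + 1) i (by omega) (by have := Finset.mem_range.mp hi; omega)
    rw [h1, Finset.sum_congr rfl h2]
    simp

theorem sig_half_period_symmetry (n : ℕ) (hn : 1 ≤ n) (l : ℕ) (hl : l ≤ 2 ^ n) :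
    Sig (2 ^ n + l) (n + 1) = Sig (2 ^ n) (n + 1) - Sig l (n + 1) := by
  rw [sigsum, sigsum, sigsum, Finset.sum_range_add]
  have h2 : ∀ i ∈ Finset.range l, Sig (2 ^ n + i) n = -Sig i n := by
    intro i hi
    exact key n n i le_rfl (by have := Finset.mem_range.mp hi; omega)
  rw [Finset.sum_congr rfl h2, Finset.sum_neg_distrib]
  ring
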